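/- arXiv:1210.2145 — 2 statements merged into one kernel-verified Lean document; each statement's English description precedes it below -/
import Mathlib

section
/- Cyclic order version of the splitting proximal point algorithm: let (H,d) be a locally compact Hadamard space, f₁,…,f_N : H → (−∞,∞] proper convex lower semicontinuous functions, and f = Σₙ fₙ with a nonempty set of minimizers. Let (λ_k)_{k∈ℕ₀} be positive reals with Σ_k λ_k = ∞ and Σ_k λ_k² < ∞. Let x₀ ∈ H and for each k ∈ ℕ₀ and n = 1,…,N let x_{kN+n} be a minimizer of z ↦ fₙ(z) + (1/(2λ_k))·d(x_{kN+n−1},z)². Assume there exists L > 0 such that fₙ(x_{kN}) − fₙ(x_{kN+n}) ≤ L·d(x_{kN},x_{kN+n}) and fₙ(x_{kN+n−1}) − fₙ(x_{kN+n}) ≤ L·d(x_{kN+n−1},x_{kN+n}) for every k ∈ ℕ₀ and n = 1,…,N. Then the sequence (x_j)_{j∈ℕ₀} converges to a minimizer of f. -/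
open Filter Topology

/-- A Hadamard space structure on a metric space `H`: a geodesic combination map
`geo x y t = (1-t)x ⊕ ty` satisfying the geodesic axioms and the CAT(0) inequality.
(Completeness is imposed via the `CompleteSpace` instance in the theorems.) -/
structure Hadamard (H : Type*) [MetricSpace H] : Type _ where
  geo : H → H → ℝ → H
  geo_zero : ∀ x y : H, geo x y 0 = x
  geo_one : ∀ x y : H, geo x y 1 = y
  geo_dist : ∀ x y : H, ∀ s ∈ Set.Icc (0 : ℝ) 1, ∀ t ∈ Set.Icc (0 : ℝ) 1,
    dist (geo x y s) (geo x y t) = |s - t| * dist x y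
  cat0 : ∀ z x y : H, ∀ t ∈ Set.Icc (0 : ℝ) 1,
    dist z (geo x y t) ^ 2
      ≤ (1 - t) * dist z x ^ 2 + t * dist z y ^ 2 - t * (1 - t) * dist x y ^ 2

/-- A function `f : H → (-∞,∞]` is (geodesically) convex if along every geodesic
`t ↦ (1-t)x ⊕ ty` it satisfies the convexity inequality. -/
def GeoConvex {H : Type*} [MetricSpace H] (G : Hadamard H) (f : H → EReal) : Prop :=
  ∀ x y : H, ∀ t ∈ Set.Icc (0 : ℝ) 1,
    f (G.geo x y t) ≤ ((1 - t : ℝ) : EReal) * f x + ((t : ℝ) : EReal) * f y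

/-! ### Auxiliary lemmas for the proof -/


/-! #### Geodesic facts and Hopf–Rinow -/

namespace HadamardAux

variable {H : Type*} [MetricSpace H] (G : Hadamard H)

lemma dist_geo_left (x y : H) {t : ℝ} (ht : t ∈ Set.Icc (0:ℝ) 1) :
    dist x (G.geo x y t) = t * dist x y := by
  have h := G.geo_dist x y 0 ⟨le_refl 0, zero_le_one⟩ t ht
  rw [G.geo_zero] at h
  rw [h, abs_of_nonpos (by linarith [ht.1])]
  ring

lemma dist_geo_right (x y : H) {t : ℝ} (ht : t ∈ Set.Icc (0:ℝ) 1) :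
    dist (G.geo x y t) y = (1 - t) * dist x y := by
  have h := G.geo_dist x y t ht 1 ⟨zero_le_one, le_refl 1⟩
  rw [G.geo_one] at h
  rw [h, abs_of_nonpos (by linarith [ht.2])]
  ring

include G in
lemma exists_near_point (y₀ : H) {r' r'' : ℝ} (hr' : 0 ≤ r') (x : H) (hx : dist y₀ x ≤ r' + r'')
    (hr'' : 0 ≤ r'') :
    ∃ p : H, dist y₀ p ≤ r' ∧ dist p x ≤ r'' := by
  rcases le_or_gt (dist y₀ x) r' with h | h
  · exact ⟨x, h, by simp [hr'']⟩
  · have hd : 0 < dist y₀ x := lt_of_le_of_lt hr' h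
    set t := r' / dist y₀ x with htdef
    have ht : t ∈ Set.Icc (0:ℝ) 1 := by
      constructor
      · positivity
      · rw [div_le_one hd]; linarith
    refine ⟨G.geo y₀ x t, ?_, ?_⟩
    · rw [dist_geo_left G y₀ x ht, htdef, div_mul_cancel₀ _ (ne_of_gt hd)]
    · rw [dist_geo_right G y₀ x ht]
      have : (1 - t) * dist y₀ x = dist y₀ x - r' := by
        rw [sub_mul, one_mul, htdef, div_mul_cancel₀ _ (ne_of_gt hd)]
      rw [this]; linarith

theorem properSpace {H : Type*} [MetricSpace H] [CompleteSpace H] [LocallyCompactSpace H]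
    (G : Hadamard H) : ProperSpace H := by
  cases isEmpty_or_nonempty H with
  | inl h =>
    constructor
    intro x r
    exact isEmptyElim x
  | inr h =>
    obtain ⟨y₀⟩ := h
    suffices hS : ∀ r : ℝ, IsCompact (Metric.closedBall y₀ r) by
      constructor
      intro x r
      exact (hS (r + dist x y₀)).of_isClosed_subset Metric.isClosed_closedBall
        (fun z hz => by
          simp only [Metric.mem_closedBall] at *
          calc dist z y₀ ≤ dist z x + dist x y₀ := dist_triangle _ _ _
            _ ≤ r + dist x y₀ := by linarith)
    set S : Set ℝ := {r : ℝ | IsCompact (Metric.closedBall y₀ r)} with hSdef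
    have h0 : (0:ℝ) ∈ S := by
      simp only [hSdef, Set.mem_setOf_eq, Metric.closedBall_zero]
      exact isCompact_singleton
    have hmono : ∀ r ∈ S, ∀ r' ≤ r, r' ∈ S := by
      intro r hr r' hr'
      exact hr.of_isClosed_subset Metric.isClosed_closedBall
        (Metric.closedBall_subset_closedBall hr')
    have hopen : ∀ r ∈ S, 0 ≤ r → ∃ ε > 0, r + ε ∈ S := by
      intro r hr hr0
      obtain ⟨K', hK', hsub⟩ := exists_compact_superset (hr : IsCompact (Metric.closedBall y₀ r))
      obtain ⟨ε, hε, hthick⟩ := hr.exists_thickening_subset_open isOpen_interior hsub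
      refine ⟨ε / 2, by linarith, ?_⟩
      have : Metric.closedBall y₀ (r + ε/2) ⊆ K' := by
        intro z hz
        simp only [Metric.mem_closedBall] at hz
        rw [dist_comm] at hz
        obtain ⟨p, hp1, hp2⟩ := exists_near_point G y₀ hr0 z hz (by linarith)
        have hpball : p ∈ Metric.closedBall y₀ r := by simpa [Metric.mem_closedBall, dist_comm]
          using hp1
        have : z ∈ Metric.thickening ε (Metric.closedBall y₀ r) := by
          rw [Metric.mem_thickening_iff]
          refine ⟨p, hpball, ?_⟩
          rw [dist_comm]
          have : dist p z ≤ ε/2 := hp2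
          linarith
        exact interior_subset (hthick this)
      exact hK'.of_isClosed_subset Metric.isClosed_closedBall this
    have hclosed : ∀ r : ℝ, 0 < r → (∀ r', 0 ≤ r' → r' < r → r' ∈ S) → r ∈ S := by
      intro r hr hall
      rw [hSdef, Set.mem_setOf_eq, isCompact_iff_totallyBounded_isComplete]
      constructor
      · rw [Metric.totallyBounded_iff]
        intro ε hε
        rcases le_or_gt r (ε/2) with hcase | hcase
        · refine ⟨{y₀}, Set.finite_singleton _, ?_⟩
          intro z hz
          simp only [Metric.mem_closedBall] at hz
          simp only [Set.mem_singleton_iff, Set.iUnion_iUnion_eq_left, Metric.mem_ball]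
          linarith
        · have hr' : (0:ℝ) ≤ r - ε/2 := by linarith
          have hcpt : IsCompact (Metric.closedBall y₀ (r - ε/2)) :=
            hall _ hr' (by linarith)
          obtain ⟨t, htfin, htcov⟩ :=
            Metric.totallyBounded_iff.1 hcpt.totallyBounded (ε/2) (by linarith)
          refine ⟨t, htfin, ?_⟩
          intro z hz
          simp only [Metric.mem_closedBall] at hz
          rw [dist_comm] at hz
          obtain ⟨p, hp1, hp2⟩ := exists_near_point G y₀ hr' z (by linarith) (by linarith)
          have hpmem : p ∈ Metric.closedBall y₀ (r - ε/2) := by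
            simpa [Metric.mem_closedBall, dist_comm] using hp1
          obtain ⟨c, hc, hcball⟩ := Set.mem_iUnion₂.1 (htcov hpmem)
          refine Set.mem_iUnion₂.2 ⟨c, hc, ?_⟩
          simp only [Metric.mem_ball] at hcball ⊢
          calc dist z c ≤ dist z p + dist p c := dist_triangle _ _ _
            _ < ε := by rw [dist_comm z p]; linarith
      · exact Metric.isClosed_closedBall.isComplete
    intro r
    by_contra hbad
    have hub : BddAbove S := by
      refine ⟨r, fun r' hr' => ?_⟩
      by_contra hlt
      push_neg at hlt
      exact hbad (hmono r' hr' r (le_of_lt hlt))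
    have hne : S.Nonempty := ⟨0, h0⟩
    set s := sSup S with hs
    have hs0 : 0 ≤ s := le_csSup hub h0
    have hsS : s ∈ S := by
      rcases eq_or_lt_of_le hs0 with heq | hpos
      · rw [← heq]; exact h0
      · refine hclosed s hpos ?_
        intro r' hr'0 hr's
        obtain ⟨r'', hr''S, hr''⟩ := exists_lt_of_lt_csSup hne hr's
        exact hmono r'' hr''S r' (le_of_lt hr'')
    obtain ⟨ε, hε, hεS⟩ := hopen s hsS hs0
    have : s + ε ≤ s := le_csSup hub hεS
    linarith

end HadamardAux

/-! #### Real sequence lemmas -/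

lemma sum_Ico_bound {a e : ℕ → ℝ} (hrec : ∀ k, a (k+1) ≤ a k + e k) :
    ∀ k m, k ≤ m → a m ≤ a k + ∑ j ∈ Finset.Ico k m, e j := by
  intro k m hkm
  induction m with
  | zero => simp [Nat.le_zero.1 hkm]
  | succ m ih =>
    rcases Nat.lt_or_ge k (m+1) with h | h
    · have hk : k ≤ m := Nat.lt_succ_iff.1 h
      have := ih hk
      have h2 := hrec m
      rw [Finset.sum_Ico_succ_top hk]
      linarith
    · have : k = m + 1 := le_antisymm hkm h
      subst this
      simp

lemma quasiFejer_tendsto {a e : ℕ → ℝ} (ha : ∀ k, 0 ≤ a k) (he : ∀ k, 0 ≤ e k)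
    (hsum : Summable e) (hrec : ∀ k, a (k+1) ≤ a k + e k) {φ : ℕ → ℕ} (hφ : StrictMono φ)
    (hlim : Tendsto (a ∘ φ) atTop (𝓝 0)) : Tendsto a atTop (𝓝 0) := by
  have hbound := sum_Ico_bound hrec
  rw [Metric.tendsto_atTop]
  intro ε hε
  set T := ∑' j, e j with hT
  set s : ℕ → ℝ := fun k => ∑ j ∈ Finset.range k, e j with hsdef
  have hsT : Tendsto s atTop (𝓝 T) := hsum.hasSum.tendsto_sum_nat
  have h1 : ∀ᶠ k in atTop, T - s k < ε/2 := by
    have : Tendsto (fun k => T - s k) atTop (𝓝 (T - T)) := tendsto_const_nhds.sub hsT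
    rw [sub_self] at this
    exact this.eventually (gt_mem_nhds (by linarith : (0:ℝ) < ε/2))
  have h2 : ∀ᶠ i in atTop, (a ∘ φ) i < ε/2 := by
    have := (hlim.eventually (gt_mem_nhds (by linarith : (0:ℝ) < ε/2)))
    exact this
  obtain ⟨K, hK⟩ := h1.exists_forall_of_atTop
  obtain ⟨I, hI⟩ := h2.exists_forall_of_atTop
  obtain ⟨i, hi⟩ : ∃ i, I ≤ i ∧ K ≤ φ i := by
    refine ⟨max I K, le_max_left _ _, ?_⟩
    calc K ≤ max I K := le_max_right _ _
      _ ≤ φ (max I K) := hφ.id_le _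
  refine ⟨φ i, fun m hm => ?_⟩
  have hA : a m ≤ a (φ i) + ∑ j ∈ Finset.Ico (φ i) m, e j := hbound _ _ hm
  have hB : ∑ j ∈ Finset.Ico (φ i) m, e j = s m - s (φ i) := by
    rw [hsdef]
    simp only []
    rw [Finset.sum_Ico_eq_sub _ hm]
  have hsm : s m ≤ T := Summable.sum_le_tsum _ (fun j _ => he _) hsum
  have hmonos : s K ≤ s (φ i) := by
    apply Finset.sum_le_sum_of_subset_of_nonneg
    · exact Finset.range_subset_range.2 hi.2
    · intro j _ _; exact he j
  have hC : a (φ i) < ε/2 := hI i hi.1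
  have hD : T - s K < ε/2 := hK K le_rfl
  have : a m < ε := by rw [hB] at hA; linarith
  rw [Real.dist_eq, sub_zero, abs_of_nonneg (ha m)]
  exact this

lemma summable_and_bounded {a d e : ℕ → ℝ} (ha : ∀ k, 0 ≤ a k) (hd : ∀ k, 0 ≤ d k)
    (he : ∀ k, 0 ≤ e k) (hsum : Summable e)
    (hrec : ∀ k, a (k+1) + d k ≤ a k + e k) :
    Summable d ∧ ∀ k, a k ≤ a 0 + ∑' j, e j := by
  have key : ∀ m, a m + ∑ j ∈ Finset.range m, d j ≤ a 0 + ∑ j ∈ Finset.range m, e j := by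
    intro m
    induction m with
    | zero => simp
    | succ m ih =>
      rw [Finset.sum_range_succ, Finset.sum_range_succ]
      have := hrec m
      linarith
  constructor
  · apply summable_of_sum_range_le hd (c := a 0 + ∑' j, e j)
    intro m
    have h1 := key m
    have h2 : ∑ j ∈ Finset.range m, e j ≤ ∑' j, e j :=
      Summable.sum_le_tsum _ (fun j _ => he _) hsum
    have := ha m
    linarith
  · intro k
    have h1 := key k
    have h2 : ∑ j ∈ Finset.range k, e j ≤ ∑' j, e j :=
      Summable.sum_le_tsum _ (fun j _ => he _) hsum
    have h3 : 0 ≤ ∑ j ∈ Finset.range k, d j :=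
      Finset.sum_nonneg fun j _ => hd j
    linarith

lemma extraction_tendsto_zero {S : ℕ → ℝ} (hnn : ∀ k, 0 ≤ S k)
    (h : ∀ ε > (0:ℝ), ∃ᶠ k in atTop, S k < ε) :
    ∃ φ : ℕ → ℕ, StrictMono φ ∧ Tendsto (S ∘ φ) atTop (𝓝 0) := by
  obtain ⟨φ, hφ, hP⟩ := Filter.extraction_forall_of_frequently
    (P := fun n k => S k < 1/(n+1)) (fun n => h _ (by positivity))
  refine ⟨φ, hφ, ?_⟩
  have h0 : Tendsto (fun n : ℕ => 1/((n:ℝ)+1)) atTop (𝓝 0) :=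
    tendsto_one_div_add_atTop_nhds_zero_nat
  refine squeeze_zero (fun n => hnn _) (fun n => le_of_lt (hP n)) h0

/-! #### EReal lemmas -/

lemma ereal_ne_top_of_add_le {a b : EReal} {r s : ℝ}
    (h : a + (r : EReal) ≤ b + (s : EReal)) (hb : b ≠ ⊤) (hb' : b ≠ ⊥) : a ≠ ⊤ := by
  intro ha
  rw [ha, EReal.top_add_coe, ← EReal.coe_toReal hb hb', ← EReal.coe_add] at h
  exact (EReal.coe_ne_top _) (top_le_iff.1 h)

lemma ereal_ne_top_of_sub_le {a b : EReal} {r : ℝ}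
    (h : a - b ≤ (r : EReal)) (hb : b ≠ ⊤) : a ≠ ⊤ := by
  intro ha
  rw [ha] at h
  induction b with
  | bot => rw [EReal.top_sub_bot] at h; exact (EReal.coe_ne_top r) (top_le_iff.1 h)
  | coe b => rw [EReal.top_sub_coe] at h; exact (EReal.coe_ne_top r) (top_le_iff.1 h)
  | top => exact hb rfl

lemma ereal_sub_le_coe {a b : EReal} {r : ℝ} (ha : a ≠ ⊤) (ha' : a ≠ ⊥)
    (hb : b ≠ ⊤) (hb' : b ≠ ⊥) (h : a - b ≤ (r : EReal)) : a.toReal - b.toReal ≤ r := by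
  rw [← EReal.coe_toReal ha ha', ← EReal.coe_toReal hb hb', ← EReal.coe_sub] at h
  exact_mod_cast h

lemma ereal_sum_ne_bot {s : Finset ℕ} {g : ℕ → EReal} (h' : ∀ n ∈ s, g n ≠ ⊥) :
    ∑ n ∈ s, g n ≠ ⊥ := by
  classical
  induction s using Finset.induction_on with
  | empty => simp
  | insert a s' hns ih =>
    rw [Finset.sum_insert hns]
    rw [Ne, EReal.add_eq_bot_iff]
    push_neg
    exact ⟨h' a (Finset.mem_insert_self _ _), ih (fun n hn => h' n (Finset.mem_insert_of_mem hn))⟩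

lemma ereal_sum_ne_top {s : Finset ℕ} {g : ℕ → EReal} (h' : ∀ n ∈ s, g n ≠ ⊥)
    (htop : ∑ n ∈ s, g n ≠ ⊤) : ∀ n ∈ s, g n ≠ ⊤ := by
  classical
  induction s using Finset.induction_on with
  | empty => simp
  | insert a s' hns ih =>
    rw [Finset.sum_insert hns] at htop
    intro n hn
    rcases Finset.mem_insert.1 hn with rfl | hn'
    · intro hna
      rw [hna, EReal.top_add_of_ne_bot
        (ereal_sum_ne_bot (fun m hm => h' m (Finset.mem_insert_of_mem hm)))] at htop
      exact htop rfl
    · refine ih (fun m hm => h' m (Finset.mem_insert_of_mem hm)) ?_ n hn'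
      intro hsum
      rw [hsum] at htop
      apply htop
      rw [add_comm]
      exact EReal.top_add_of_ne_bot (h' a (Finset.mem_insert_self _ _))

lemma ereal_sum_coe {s : Finset ℕ} {g : ℕ → EReal} (h : ∀ n ∈ s, g n ≠ ⊤)
    (h' : ∀ n ∈ s, g n ≠ ⊥) :
    ∑ n ∈ s, g n = ((∑ n ∈ s, (g n).toReal : ℝ) : EReal) := by
  classical
  induction s using Finset.induction_on with
  | empty => simp
  | insert a s' hns ih =>
    rw [Finset.sum_insert hns, Finset.sum_insert hns,
      ih (fun n hn => h n (Finset.mem_insert_of_mem hn))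
         (fun n hn => h' n (Finset.mem_insert_of_mem hn)),
      ← EReal.coe_toReal (h a (Finset.mem_insert_self _ _)) (h' a (Finset.mem_insert_self _ _)),
      ← EReal.coe_add]
    norm_cast

lemma lsc_sum_ereal {α : Type*} [TopologicalSpace α] {s : Finset ℕ} {g : ℕ → α → EReal}
    (hg : ∀ n ∈ s, LowerSemicontinuous (g n)) (hb : ∀ n ∈ s, ∀ w, g n w ≠ ⊥) :
    LowerSemicontinuous (fun w => ∑ n ∈ s, g n w) := by
  classical
  induction s using Finset.induction_on with
  | empty => simpa using lowerSemicontinuous_const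
  | insert a s' hns ih =>
    have h1 : LowerSemicontinuous (fun w => g a w + ∑ n ∈ s', g n w) := by
      apply LowerSemicontinuous.add'
      · exact hg a (Finset.mem_insert_self _ _)
      · exact ih (fun n hn => hg n (Finset.mem_insert_of_mem hn))
          (fun n hn => hb n (Finset.mem_insert_of_mem hn))
      · intro w
        exact EReal.continuousAt_add
          (Or.inr (ereal_sum_ne_bot (fun n hn => hb n (Finset.mem_insert_of_mem hn) w)))
          (Or.inl (hb a (Finset.mem_insert_self _ _) w))
    have h2 : (fun w => ∑ n ∈ insert a s', g n w) = (fun w => g a w + ∑ n ∈ s', g n w) := by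
      funext w
      rw [Finset.sum_insert hns]
    rw [h2]
    exact h1

/-! #### Limit argument and the resolvent inequality -/

lemma le_of_forall_Ioc {A B F2 : ℝ} (hF : 0 ≤ F2)
    (h : ∀ t : ℝ, 0 < t → t ≤ 1 → A ≤ B + t * F2) : A ≤ B := by
  apply le_of_forall_pos_le_add
  intro ε hε
  have ht1 : (0:ℝ) < min 1 (ε/(F2+1)) := by
    apply lt_min one_pos
    positivity
  have := h _ ht1 (min_le_left _ _)
  have h2 : min 1 (ε/(F2+1)) * F2 ≤ ε := by
    have h3 : min 1 (ε/(F2+1)) ≤ ε/(F2+1) := min_le_right _ _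
    have h4 : min 1 (ε/(F2+1)) * F2 ≤ (ε/(F2+1)) * F2 :=
      mul_le_mul_of_nonneg_right h3 hF
    have h5 : (ε/(F2+1)) * F2 ≤ ε := by
      rw [div_mul_eq_mul_div, div_le_iff₀ (by linarith)]
      nlinarith
    linarith
  linarith

lemma resolvent_ineq {H : Type*} [MetricSpace H] (G : Hadamard H) (f : H → EReal)
    (hbot : ∀ w, f w ≠ ⊥) (hconv : GeoConvex G f)
    {lam : ℝ} (hlam : 0 < lam) {xp xn : H}
    (hstep : ∀ z : H, f xn + ((1/(2*lam) * dist xp xn ^ 2 : ℝ) : EReal)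
      ≤ f z + ((1/(2*lam) * dist xp z ^ 2 : ℝ) : EReal))
    (hxn : f xn ≠ ⊤) {y : H} (hy : f y ≠ ⊤) :
    2*lam*((f xn).toReal - (f y).toReal) + dist xp xn ^ 2 + dist xn y ^ 2 ≤ dist xp y ^ 2 := by
  set A := (f xn).toReal with hAdef
  set B := (f y).toReal with hBdef
  have hA : f xn = (A : EReal) := (EReal.coe_toReal hxn (hbot xn)).symm
  have hB : f y = (B : EReal) := (EReal.coe_toReal hy (hbot y)).symm
  set c := 1/(2*lam) with hcdef
  have hc : 0 < c := by positivity
  set D := dist xp xn with hDdef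
  set E := dist xp y with hEdef
  set F := dist xn y with hFdef
  have main : ∀ t : ℝ, 0 < t → t ≤ 1 →
      A + c*D^2 + c*F^2 ≤ B + c*E^2 + t * (c*F^2) := by
    intro t ht0 ht1
    have htIcc : t ∈ Set.Icc (0:ℝ) 1 := ⟨le_of_lt ht0, ht1⟩
    set zt := G.geo xn y t with hzt
    have hCge : f zt ≤ (((1-t)*A + t*B : ℝ) : EReal) := by
      calc f zt ≤ ((1 - t : ℝ) : EReal) * f xn + ((t : ℝ) : EReal) * f y :=
            hconv xn y t htIcc
        _ = (((1-t)*A + t*B : ℝ) : EReal) := by rw [hA, hB]; norm_cast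
    have hCne_top : f zt ≠ ⊤ := ne_top_of_le_ne_top (EReal.coe_ne_top _) hCge
    set C := (f zt).toReal with hCdef
    have hC : f zt = (C : EReal) := (EReal.coe_toReal hCne_top (hbot zt)).symm
    have hCB : C ≤ (1-t)*A + t*B := by
      rw [hC] at hCge; exact_mod_cast hCge
    have h1 : A + c*D^2 ≤ C + c * dist xp zt ^ 2 := by
      have := hstep zt
      rw [hA, hC] at this
      exact_mod_cast this
    have h2 : dist xp zt ^ 2 ≤ (1-t)*D^2 + t*E^2 - t*(1-t)*F^2 :=
      G.cat0 xp xn y t htIcc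
    have h3 : c * dist xp zt ^ 2 ≤ c * ((1-t)*D^2 + t*E^2 - t*(1-t)*F^2) :=
      mul_le_mul_of_nonneg_left h2 (le_of_lt hc)
    have h4 : A + c*D^2 ≤ (1-t)*A + t*B + c*((1-t)*D^2 + t*E^2 - t*(1-t)*F^2) := by
      linarith
    have key : t * (A + c*D^2 + c*F^2) ≤ t * (B + c*E^2 + t*(c*F^2)) := by nlinarith [h4]
    exact (mul_le_mul_iff_right₀ ht0).1 key
  have hfin : A + c*D^2 + c*F^2 ≤ B + c*E^2 :=
    le_of_forall_Ioc (by positivity) main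
  have hc2 : c * (2*lam) = 1 := by
    rw [hcdef]; field_simp
  nlinarith [hfin, mul_le_mul_of_nonneg_left hfin (le_of_lt (by positivity : (0:ℝ) < 2*lam))]


/-- Cyclic order version of the splitting proximal point algorithm: the sequence
`(x j)` produced by cyclically applying the resolvents of the components
`f₁, …, f_N` converges to a minimizer of `f = ∑ₙ fₙ`. -/
theorem cyclic_splitting_ppa_converges
    {H : Type*} [MetricSpace H] [CompleteSpace H] [LocallyCompactSpace H]
    (G : Hadamard H)
    (N : ℕ) (hN : 1 ≤ N)
    (fs : ℕ → H → EReal)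
    (hfs_ne_bot : ∀ n ∈ Finset.Icc 1 N, ∀ x : H, fs n x ≠ ⊥)
    (hfs_proper : ∀ n ∈ Finset.Icc 1 N, ∃ x : H, fs n x ≠ ⊤)
    (hfs_conv : ∀ n ∈ Finset.Icc 1 N, GeoConvex G (fs n))
    (hfs_lsc : ∀ n ∈ Finset.Icc 1 N, LowerSemicontinuous (fs n))
    (hmin_ne : ∃ z : H, ∀ y : H,
      (∑ n ∈ Finset.Icc 1 N, fs n z) ≤ ∑ n ∈ Finset.Icc 1 N, fs n y)
    (lam : ℕ → ℝ) (hlam_pos : ∀ k, 0 < lam k)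
    (hlam_div : ¬ Summable lam) (hlam_sq : Summable fun k => lam k ^ 2)
    (x : ℕ → H)
    (hstep : ∀ k : ℕ, ∀ n ∈ Finset.Icc 1 N, ∀ z : H,
      fs n (x (k * N + n))
          + ((1 / (2 * lam k) * dist (x (k * N + n - 1)) (x (k * N + n)) ^ 2 : ℝ) : EReal)
        ≤ fs n z + ((1 / (2 * lam k) * dist (x (k * N + n - 1)) z ^ 2 : ℝ) : EReal))
    (L : ℝ) (hL : 0 < L)
    (hlip₀ : ∀ k : ℕ, ∀ n ∈ Finset.Icc 1 N,
      fs n (x (k * N)) - fs n (x (k * N + n))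
        ≤ ((L * dist (x (k * N)) (x (k * N + n)) : ℝ) : EReal))
    (hlip₁ : ∀ k : ℕ, ∀ n ∈ Finset.Icc 1 N,
      fs n (x (k * N + n - 1)) - fs n (x (k * N + n))
        ≤ ((L * dist (x (k * N + n - 1)) (x (k * N + n)) : ℝ) : EReal)) :
    ∃ z : H,
      (∀ y : H, (∑ n ∈ Finset.Icc 1 N, fs n z) ≤ ∑ n ∈ Finset.Icc 1 N, fs n y) ∧
        Tendsto x atTop (𝓝 z) := by
  classical
  have hNpos : 0 < N := hN
  haveI hprop : ProperSpace H := HadamardAux.properSpace G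
  obtain ⟨y₀, hy₀⟩ := hmin_ne
  -- finiteness of the values along the iterates
  have hfin_n : ∀ (k : ℕ), ∀ n ∈ Finset.Icc 1 N, fs n (x (k*N + n)) ≠ ⊤ := by
    intro k n hn
    obtain ⟨w, hw⟩ := hfs_proper n hn
    exact ereal_ne_top_of_add_le (hstep k n hn w) hw (hfs_ne_bot n hn w)
  have hfin_prev : ∀ (k : ℕ), ∀ n ∈ Finset.Icc 1 N, fs n (x (k*N + n - 1)) ≠ ⊤ := fun k n hn =>
    ereal_ne_top_of_sub_le (hlip₁ k n hn) (hfin_n k n hn)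
  have hfin0 : ∀ (k : ℕ), ∀ n ∈ Finset.Icc 1 N, fs n (x (k*N)) ≠ ⊤ := fun k n hn =>
    ereal_ne_top_of_sub_le (hlip₀ k n hn) (hfin_n k n hn)
  -- step-size bound
  have dstep : ∀ (k : ℕ), ∀ n ∈ Finset.Icc 1 N,
      dist (x (k*N + n - 1)) (x (k*N + n)) ≤ 2*L*lam k := by
    intro k n hn
    set D := dist (x (k*N+n-1)) (x (k*N+n)) with hD
    have h1 := hstep k n hn (x (k*N + n - 1))
    rw [dist_self] at h1
    have h0 : ((1 / (2 * lam k) * (0:ℝ) ^ 2 : ℝ) : EReal) = ((0:ℝ) : EReal) := by norm_num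
    rw [h0, EReal.coe_zero, add_zero] at h1
    set A := (fs n (x (k*N+n))).toReal with hAd
    set B := (fs n (x (k*N+n-1))).toReal with hBd
    have hA : fs n (x (k*N+n)) = (A : EReal) :=
      (EReal.coe_toReal (hfin_n k n hn) (hfs_ne_bot n hn _)).symm
    have hB : fs n (x (k*N+n-1)) = (B : EReal) :=
      (EReal.coe_toReal (hfin_prev k n hn) (hfs_ne_bot n hn _)).symm
    rw [hA, hB] at h1
    have h1' : A + 1/(2*lam k) * D^2 ≤ B := by exact_mod_cast h1
    have h2 : B - A ≤ L * D := ereal_sub_le_coe (hfin_prev k n hn) (hfs_ne_bot n hn _)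
      (hfin_n k n hn) (hfs_ne_bot n hn _) (hlip₁ k n hn)
    have hlamk := hlam_pos k
    have hD0 : (0:ℝ) ≤ D := dist_nonneg
    rcases eq_or_lt_of_le hD0 with heq | hpos
    · rw [← heq]; positivity
    · have h4 : 1/(2*lam k) * D^2 ≤ L * D := by linarith
      have h5 : D^2 ≤ 2*lam k*(L*D) := by
        have hmul := mul_le_mul_of_nonneg_left h4 (le_of_lt (by positivity : (0:ℝ) < 2*lam k))
        calc D^2 = 2*lam k*(1/(2*lam k)*D^2) := by field_simp
          _ ≤ 2*lam k*(L*D) := hmul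
      have h6 : D*D ≤ (2*L*lam k)*D := by nlinarith [h5]
      exact le_of_mul_le_mul_right h6 hpos
  -- cumulative distance bound
  have ddist0 : ∀ (k : ℕ), ∀ n : ℕ, n ≤ N →
      dist (x (k*N)) (x (k*N + n)) ≤ 2*L*(n:ℝ)*lam k := by
    intro k n
    induction n with
    | zero => intro _; simp
    | succ m ih =>
      intro hm
      have h1 := ih (by omega)
      have hmem : m + 1 ∈ Finset.Icc 1 N := Finset.mem_Icc.2 ⟨by omega, hm⟩
      have h2 := dstep k (m+1) hmem
      have hidx : k*N + (m+1) - 1 = k*N + m := by omega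
      rw [hidx] at h2
      have htri : dist (x (k*N)) (x (k*N + (m+1)))
          ≤ dist (x (k*N)) (x (k*N+m)) + dist (x (k*N+m)) (x (k*N+(m+1))) := dist_triangle _ _ _
      have hlamk := hlam_pos k
      have hcast : 2*L*((m:ℝ)+1)*lam k = 2*L*(m:ℝ)*lam k + 2*L*lam k := by ring
      push_cast
      push_cast at h1
      linarith
  -- notation: real-valued total objective
  set Φ : H → ℝ := fun w => ∑ n ∈ Finset.Icc 1 N, (fs n w).toReal with hΦdef
  -- the per-cycle inequality, for any competitor with finite values
  have cycle : ∀ y : H, (∀ n ∈ Finset.Icc 1 N, fs n y ≠ ⊤) → ∀ k : ℕ,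
      dist (x ((k+1)*N)) y ^ 2 + 2 * lam k * (Φ (x (k*N)) - Φ y)
      ≤ dist (x (k*N)) y ^ 2 + 4*L^2*(N:ℝ)^2*lam k^2 := by
    intro y hy k
    simp only [hΦdef]
    have tel : ∀ m : ℕ, m ≤ N → dist (x (k*N + m)) y ^2
        + ∑ n ∈ Finset.Icc 1 m, 2*lam k*((fs n (x (k*N+n))).toReal - (fs n y).toReal)
        ≤ dist (x (k*N)) y ^2 := by
      intro m
      induction m with
      | zero => intro _; simp
      | succ m ih =>
        intro hm
        have h1 := ih (by omega)
        have hmem : m+1 ∈ Finset.Icc 1 N := Finset.mem_Icc.2 ⟨by omega, hm⟩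
        have hres := resolvent_ineq G (fs (m+1)) (hfs_ne_bot _ hmem) (hfs_conv _ hmem)
          (hlam_pos k) (hstep k (m+1) hmem) (hfin_n k (m+1) hmem) (hy (m+1) hmem)
        have hidx : k*N + (m+1) - 1 = k*N + m := by omega
        rw [hidx] at hres
        rw [Finset.sum_Icc_succ_top (by omega : 1 ≤ m+1)]
        have hD2 : (0:ℝ) ≤ dist (x (k*N+m)) (x (k*N+(m+1))) ^2 := by positivity
        linarith
    have telN := tel N le_rfl
    have hNN : k*N + N = (k+1)*N := by ring
    rw [hNN] at telN
    have per : ∀ n ∈ Finset.Icc 1 N,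
        2*lam k*((fs n (x (k*N))).toReal - (fs n y).toReal) - 4*L^2*(N:ℝ)*lam k^2
          ≤ 2*lam k*((fs n (x (k*N+n))).toReal - (fs n y).toReal) := by
      intro n hn
      have h2 := ereal_sub_le_coe (hfin0 k n hn) (hfs_ne_bot n hn _)
        (hfin_n k n hn) (hfs_ne_bot n hn _) (hlip₀ k n hn)
      obtain ⟨hn1, hn2⟩ := Finset.mem_Icc.1 hn
      have h3 := ddist0 k n hn2
      have h4 : (n:ℝ) ≤ (N:ℝ) := by exact_mod_cast hn2
      have hlamk := hlam_pos k
      have hd : dist (x (k*N)) (x (k*N+n)) ≤ 2*L*(N:ℝ)*lam k := by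
        have hmm := mul_le_mul_of_nonneg_left
          (mul_le_mul_of_nonneg_right h4 (hlam_pos k).le) (by positivity : (0:ℝ) ≤ 2*L)
        calc dist (x (k*N)) (x (k*N+n)) ≤ 2*L*(n:ℝ)*lam k := h3
          _ = 2*L*((n:ℝ)*lam k) := by ring
          _ ≤ 2*L*((N:ℝ)*lam k) := hmm
          _ = 2*L*(N:ℝ)*lam k := by ring
      have h5 : (fs n (x (k*N))).toReal - (fs n (x (k*N+n))).toReal ≤ 2*L^2*(N:ℝ)*lam k := by
        have h6 : L * dist (x (k*N)) (x (k*N+n)) ≤ L*(2*L*(N:ℝ)*lam k) :=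
          mul_le_mul_of_nonneg_left hd (le_of_lt hL)
        nlinarith [h2]
      nlinarith [h5, hlamk]
    have hsum := Finset.sum_le_sum per
    have hcard : ((Finset.Icc 1 N).card : ℝ) = (N:ℝ) := by
      rw [Nat.card_Icc]
      push_cast
      ring
    have lhs_eq : ∑ n ∈ Finset.Icc 1 N,
        (2*lam k*((fs n (x (k*N))).toReal - (fs n y).toReal) - 4*L^2*(N:ℝ)*lam k^2)
        = 2*lam k*((∑ n ∈ Finset.Icc 1 N, (fs n (x (k*N))).toReal)
            - ∑ n ∈ Finset.Icc 1 N, (fs n y).toReal) - 4*L^2*(N:ℝ)^2*lam k^2 := by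
      rw [Finset.sum_sub_distrib, Finset.sum_const, nsmul_eq_mul, hcard,
        ← Finset.mul_sum, Finset.sum_sub_distrib]
      ring
    rw [lhs_eq] at hsum
    linarith
  have hcoe : ∀ w : H, (∀ n ∈ Finset.Icc 1 N, fs n w ≠ ⊤) →
      (∑ n ∈ Finset.Icc 1 N, fs n w) = ((Φ w : ℝ) : EReal) := fun w hw =>
    ereal_sum_coe hw (fun n hn => hfs_ne_bot n hn w)
  -- the minimizer y₀ has finite values
  have hy₀fin : ∀ n ∈ Finset.Icc 1 N, fs n y₀ ≠ ⊤ := by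
    apply ereal_sum_ne_top (fun n hn => hfs_ne_bot n hn y₀)
    intro htop
    have h1 := hy₀ (x (0*N))
    rw [htop, hcoe _ (hfin0 0)] at h1
    exact (EReal.coe_ne_top _) (top_le_iff.1 h1)
  have hcmp : ∀ u v : H, (∀ n ∈ Finset.Icc 1 N, fs n u ≠ ⊤) →
      (∀ n ∈ Finset.Icc 1 N, fs n v ≠ ⊤) →
      (∑ n ∈ Finset.Icc 1 N, fs n u) ≤ (∑ n ∈ Finset.Icc 1 N, fs n v) → Φ u ≤ Φ v := by
    intro u v hu hv h
    rw [hcoe u hu, hcoe v hv] at h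
    exact_mod_cast h
  -- quasi-Fejér data with respect to y₀
  have esum : Summable (fun k => 4*L^2*(N:ℝ)^2*lam k^2) := hlam_sq.mul_left _
  have hgap0 : ∀ k, 0 ≤ Φ (x (k*N)) - Φ y₀ := fun k =>
    sub_nonneg.2 (hcmp y₀ (x (k*N)) hy₀fin (hfin0 k) (hy₀ _))
  obtain ⟨hδsum, hbdd⟩ := summable_and_bounded
    (a := fun k => dist (x (k*N)) y₀ ^2)
    (d := fun k => 2*lam k*(Φ (x (k*N)) - Φ y₀))
    (e := fun k => 4*L^2*(N:ℝ)^2*lam k^2)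
    (fun k => by positivity)
    (fun k => mul_nonneg (by linarith [hlam_pos k]) (hgap0 k))
    (fun k => by positivity) esum
    (fun k => by have := cycle y₀ hy₀fin k; linarith)
  -- the objective gap is frequently small
  have hfreq : ∀ ε > (0:ℝ), ∃ᶠ k in atTop, Φ (x (k*N)) - Φ y₀ < ε := by
    intro ε hε
    by_contra hcon
    rw [Filter.not_frequently] at hcon
    rw [Filter.eventually_atTop] at hcon
    obtain ⟨K, hK⟩ := hcon
    apply hlam_div
    rw [← summable_nat_add_iff K]
    refine Summable.of_nonneg_of_le (fun k => (hlam_pos _).le)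
      (g := fun k => lam (k+K))
      (f := fun k => (1/(2*ε)) * (2*lam (k+K)*(Φ (x ((k+K)*N)) - Φ y₀)))
      (fun k => ?_) (((summable_nat_add_iff K).2 hδsum).mul_left _)
    · have h1 : ε ≤ Φ (x ((k+K)*N)) - Φ y₀ := not_lt.1 (hK (k+K) (by omega))
      have h2 := hlam_pos (k+K)
      have h3 : (1/(2*ε)) * (2*lam (k+K)*ε) ≤ (1/(2*ε)) * (2*lam (k+K)*(Φ (x ((k+K)*N)) - Φ y₀)) := by
        apply mul_le_mul_of_nonneg_left _ (by positivity)
        apply mul_le_mul_of_nonneg_left h1 (by positivity)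
      have h4 : (1/(2*ε)) * (2*lam (k+K)*ε) = lam (k+K) := by field_simp
      linarith
  -- extract a subsequence along which the gap tends to zero
  obtain ⟨φ, hφmono, hφlim⟩ := extraction_tendsto_zero hgap0 hfreq
  -- the iterates are bounded
  set T := ∑' j, 4*L^2*(N:ℝ)^2*lam j^2 with hTdef
  set R := Real.sqrt (dist (x (0*N)) y₀ ^2 + T) with hRdef
  have hball : ∀ k, x (k*N) ∈ Metric.closedBall y₀ R := by
    intro k
    rw [Metric.mem_closedBall]
    have h1 : dist (x (k*N)) y₀ ^2 ≤ dist (x (0*N)) y₀ ^2 + T := hbdd k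
    rw [hRdef, ← Real.sqrt_sq (dist_nonneg : (0:ℝ) ≤ dist (x (k*N)) y₀)]
    exact Real.sqrt_le_sqrt h1
  have hcpt : IsCompact (Metric.closedBall y₀ R) := isCompact_closedBall y₀ R
  obtain ⟨z, hzball, ψ, hψmono, hψlim⟩ :=
    hcpt.tendsto_subseq (x := fun i => x (φ i * N)) (fun i => hball (φ i))
  -- the gap tends to zero along the doubly-extracted subsequence
  have hgapψ : Tendsto (fun i => Φ (x (φ (ψ i) * N)) - Φ y₀) atTop (𝓝 0) :=
    hφlim.comp hψmono.tendsto_atTop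
  have hΦψ : Tendsto (fun i => Φ (x (φ (ψ i) * N))) atTop (𝓝 (Φ y₀)) := by
    have h1 := hgapψ.add_const (Φ y₀)
    simpa using h1
  -- lower semicontinuity of the sum
  have hlscsum : LowerSemicontinuous (fun w => ∑ n ∈ Finset.Icc 1 N, fs n w) :=
    lsc_sum_ereal hfs_lsc (fun n hn w => hfs_ne_bot n hn w)
  -- z is a minimizer
  have hzmin_le : (∑ n ∈ Finset.Icc 1 N, fs n z) ≤ ((Φ y₀ : ℝ) : EReal) := by
    by_contra hcon
    push_neg at hcon
    obtain ⟨c, hc1, hc2⟩ := exists_between hcon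
    have hev1 : ∀ᶠ w in 𝓝 z, c < ∑ n ∈ Finset.Icc 1 N, fs n w := (hlscsum z) c hc2
    have hev2 : ∀ᶠ i in atTop, c < ∑ n ∈ Finset.Icc 1 N, fs n (x (φ (ψ i) * N)) :=
      hψlim.eventually hev1
    have hlimE : Tendsto (fun i => ((Φ (x (φ (ψ i) * N)) : ℝ) : EReal)) atTop
        (𝓝 ((Φ y₀ : ℝ) : EReal)) :=
      (continuous_coe_real_ereal.tendsto _).comp hΦψ
    have hle : c ≤ ((Φ y₀ : ℝ) : EReal) := by
      apply ge_of_tendsto hlimE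
      filter_upwards [hev2] with i hi
      rw [← hcoe _ (hfin0 (φ (ψ i)))]
      exact hi.le
    exact absurd (lt_of_le_of_lt hle hc1) (lt_irrefl _)
  have hzfin : ∀ n ∈ Finset.Icc 1 N, fs n z ≠ ⊤ :=
    ereal_sum_ne_top (fun n hn => hfs_ne_bot n hn z)
      (ne_top_of_le_ne_top (EReal.coe_ne_top _) hzmin_le)
  have hzmin : ∀ y : H, (∑ n ∈ Finset.Icc 1 N, fs n z) ≤ ∑ n ∈ Finset.Icc 1 N, fs n y := by
    intro y
    calc (∑ n ∈ Finset.Icc 1 N, fs n z) ≤ ((Φ y₀ : ℝ) : EReal) := hzmin_le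
      _ = ∑ n ∈ Finset.Icc 1 N, fs n y₀ := (hcoe y₀ hy₀fin).symm
      _ ≤ ∑ n ∈ Finset.Icc 1 N, fs n y := hy₀ y
  -- convergence of the subsequence distances to z
  have hsubdist : Tendsto (fun i => dist (x (φ (ψ i) * N)) z ^2) atTop (𝓝 0) := by
    have h1 : Tendsto (fun i => dist (x (φ (ψ i) * N)) z) atTop (𝓝 0) :=
      tendsto_iff_dist_tendsto_zero.1 hψlim
    have h2 := h1.pow 2
    simpa using h2
  -- full quasi-Fejér convergence towards z
  have hgapz : ∀ k, 0 ≤ Φ (x (k*N)) - Φ z := fun k =>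
    sub_nonneg.2 (hcmp z (x (k*N)) hzfin (hfin0 k) (hzmin _))
  have haz : Tendsto (fun k => dist (x (k*N)) z ^2) atTop (𝓝 0) := by
    apply quasiFejer_tendsto (e := fun k => 4*L^2*(N:ℝ)^2*lam k^2)
      (fun k => by positivity) (fun k => by positivity) esum
      (fun k => by
        have h1 := cycle z hzfin k
        have h2 := hgapz k
        have h3 := (hlam_pos k).le
        nlinarith [mul_nonneg h3 h2])
      (hφmono.comp hψmono)
    exact hsubdist
  have hdistz : Tendsto (fun k => dist (x (k*N)) z) atTop (𝓝 0) := by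
    have h1 := (Real.continuous_sqrt.tendsto 0).comp haz
    rw [Real.sqrt_zero] at h1
    refine h1.congr fun k => ?_
    exact Real.sqrt_sq dist_nonneg
  -- λ → 0
  have hlam0 : Tendsto (fun k => 2*L*(N:ℝ)*lam k) atTop (𝓝 0) := by
    have h1 := hlam_sq.tendsto_atTop_zero
    have h2 := (Real.continuous_sqrt.tendsto 0).comp h1
    rw [Real.sqrt_zero] at h2
    have h3 : Tendsto lam atTop (𝓝 0) :=
      h2.congr fun k => Real.sqrt_sq (hlam_pos k).le
    have h4 := h3.const_mul (2*L*(N:ℝ))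
    simpa using h4
  -- conclude
  refine ⟨z, hzmin, ?_⟩
  rw [Metric.tendsto_atTop]
  intro ε hε
  obtain ⟨K1, hK1⟩ := (Metric.tendsto_atTop.1 hdistz) (ε/2) (by linarith)
  obtain ⟨K2, hK2⟩ := (Metric.tendsto_atTop.1 hlam0) (ε/2) (by linarith)
  refine ⟨(max K1 K2)*N + 1, fun j hj => ?_⟩
  have hj1 : 1 ≤ j := le_trans (by omega) hj
  set k := (j-1)/N with hkdef
  set r := (j-1)%N with hrdef
  have hdm : k*N + r = j - 1 := by rw [mul_comm]; exact Nat.div_add_mod (j-1) N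
  have hrN : r < N := Nat.mod_lt _ hNpos
  have hjeq : j = k*N + (r+1) := by omega
  have hkK : max K1 K2 ≤ k := by
    rw [hkdef, Nat.le_div_iff_mul_le hNpos]
    omega
  have hd1 : dist (x (k*N)) (x j) ≤ 2*L*((r:ℝ)+1)*lam k := by
    rw [hjeq]
    have := ddist0 k (r+1) (by omega)
    push_cast at this
    exact this
  have hd2 : dist (x (k*N)) (x j) ≤ 2*L*(N:ℝ)*lam k := by
    have hr1N : ((r:ℝ)+1) ≤ (N:ℝ) := by exact_mod_cast hrN
    have hmm := mul_le_mul_of_nonneg_left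
      (mul_le_mul_of_nonneg_right hr1N (hlam_pos k).le) (by positivity : (0:ℝ) ≤ 2*L)
    calc dist (x (k*N)) (x j) ≤ 2*L*((r:ℝ)+1)*lam k := hd1
      _ = 2*L*(((r:ℝ)+1)*lam k) := by ring
      _ ≤ 2*L*((N:ℝ)*lam k) := hmm
      _ = 2*L*(N:ℝ)*lam k := by ring
  have h2 := hK1 k (le_trans (le_max_left _ _) hkK)
  have h3 := hK2 k (le_trans (le_max_right _ _) hkK)
  rw [Real.dist_eq, sub_zero, abs_of_nonneg dist_nonneg] at h2
  rw [Real.dist_eq, sub_zero, abs_of_nonneg (mul_nonneg (by positivity : (0:ℝ) ≤ 2*L*(N:ℝ)) (hlam_pos k).le)] at h3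
  calc dist (x j) z ≤ dist (x j) (x (k*N)) + dist (x (k*N)) z := dist_triangle _ _ _
    _ = dist (x (k*N)) (x j) + dist (x (k*N)) z := by rw [dist_comm]
    _ < ε := by linarith
end

section
/- Conditional expectation estimate for the random splitting proximal point algorithm: let (H,d) be a Hadamard space, f₁,…,f_N : H → (−∞,∞] proper convex lower semicontinuous functions, f = Σₙ fₙ, and (λ_k)_{k∈ℕ₀} positive reals. On a probability space, let (r_k)_{k∈ℕ₀} be independent random variables uniformly distributed on {1,…,N}. Fix x₀ ∈ H, and for each k ∈ ℕ₀ and each n ∈ {1,…,N} let x_{k+1}ⁿ denote the minimizer of z ↦ fₙ(z) + (1/(2λ_k))·d(x_k,z)², and set x_{k+1} := x_{k+1}^{r_k}. Assume there exists L > 0 such that fₙ(x_k) − fₙ(x_{k+1}ⁿ) ≤ L·d(x_k,x_{k+1}ⁿ) for every k ∈ ℕ₀ and n = 1,…,N. Let F_k := σ(x₀,…,x_k). Then for every y ∈ H with f(y) < ∞ and every k ∈ ℕ₀, almost surely E[d(x_{k+1},y)² | F_k] ≤ d(x_k,y)² − (2λ_k/N)·(f(x_k) − f(y)) + 4λ_k²·L².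 -/
open Filter Topology

open MeasureTheory ProbabilityTheory

section AuxGeo

variable {H : Type*} [MetricSpace H]

/-- Uniqueness of proximal points in Hadamard spaces. -/
lemma hadamard_prox_unique (G : Hadamard H) {f : H → EReal} (hconv : GeoConvex G f)
    {lam : ℝ} (hlam : 0 < lam) {x p q : H} {bp bq : ℝ}
    (hfp : f p = (bp : ℝ)) (hfq : f q = (bq : ℝ))
    (hminp : ∀ z, f p + ((1 / (2 * lam) * dist x p ^ 2 : ℝ) : EReal)
      ≤ f z + ((1 / (2 * lam) * dist x z ^ 2 : ℝ) : EReal))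
    (hminq : ∀ z, f q + ((1 / (2 * lam) * dist x q ^ 2 : ℝ) : EReal)
      ≤ f z + ((1 / (2 * lam) * dist x z ^ 2 : ℝ) : EReal)) : p = q := by
  set m := G.geo p q (1/2) with hm
  have ht : (1/2 : ℝ) ∈ Set.Icc (0:ℝ) 1 := by norm_num
  have hfm_le : f m ≤ (((1 - 1/2) * bp + (1/2) * bq : ℝ) : EReal) := by
    have := hconv p q (1/2) ht
    rw [hfp, hfq] at this
    refine this.trans_eq ?_
    norm_cast
  have hfm_ne_bot : f m ≠ ⊥ := by
    intro hbot
    have := hminp m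
    rw [hbot, hfp] at this
    simp only [EReal.bot_add] at this
    exact (EReal.coe_add bp _ ▸ (not_le.2 (EReal.bot_lt_coe _))) this
  have hfm_ne_top : f m ≠ ⊤ := ne_top_of_le_ne_top (EReal.coe_ne_top _) hfm_le
  set e := (f m).toReal with he
  have hfm : f m = (e : ℝ) := (EReal.coe_toReal hfm_ne_top hfm_ne_bot).symm
  have hew : e ≤ (1 - 1/2) * bp + (1/2) * bq := by
    rw [hfm] at hfm_le; exact_mod_cast hfm_le
  have hcat := G.cat0 x p q (1/2) ht
  rw [← hm] at hcat
  have h1 : bp + 1 / (2 * lam) * dist x p ^ 2 ≤ e + 1 / (2 * lam) * dist x m ^ 2 := by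
    have := hminp m
    rw [hfp, hfm, ← EReal.coe_add, ← EReal.coe_add] at this
    exact_mod_cast this
  have h2 : bq + 1 / (2 * lam) * dist x q ^ 2 ≤ e + 1 / (2 * lam) * dist x m ^ 2 := by
    have := hminq m
    rw [hfq, hfm, ← EReal.coe_add, ← EReal.coe_add] at this
    exact_mod_cast this
  have hd2 : dist p q ^ 2 ≤ 0 := by
    have hl : (0:ℝ) < 1 / (2 * lam) := by positivity
    nlinarith [hcat, h1, h2, hew]
  have : dist p q = 0 := by nlinarith [dist_nonneg (x := p) (y := q)]
  exact dist_eq_zero.1 this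

/-- The proximal inequality in Hadamard spaces. -/
lemma hadamard_prox_ineq (G : Hadamard H) {f : H → EReal} (hconv : GeoConvex G f)
    {lam : ℝ} (hlam : 0 < lam) {x p y : H} {b c : ℝ}
    (hfp : f p = (b : ℝ)) (hfy : f y = (c : ℝ))
    (hmin : ∀ z, f p + ((1 / (2 * lam) * dist x p ^ 2 : ℝ) : EReal)
      ≤ f z + ((1 / (2 * lam) * dist x z ^ 2 : ℝ) : EReal)) :
    dist p y ^ 2 ≤ dist x y ^ 2 - 2 * lam * (b - c) - dist x p ^ 2 := by
  have key : ∀ t : ℝ, t ∈ Set.Ioc (0:ℝ) 1 →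
      (1 - t) * dist p y ^ 2 ≤ dist x y ^ 2 - 2 * lam * (b - c) - dist x p ^ 2 := by
    intro t ht
    have ht01 : t ∈ Set.Icc (0:ℝ) 1 := ⟨ht.1.le, ht.2⟩
    set z := G.geo p y t with hz
    have hfz_le : f z ≤ (((1 - t) * b + t * c : ℝ) : EReal) := by
      have := hconv p y t ht01
      rw [hfp, hfy] at this
      refine this.trans_eq ?_
      norm_cast
    have hcat := G.cat0 x p y t ht01
    rw [← hz] at hcat
    have h1 : ((b + 1 / (2 * lam) * dist x p ^ 2 : ℝ) : EReal)
        ≤ (((1 - t) * b + t * c + 1 / (2 * lam) * dist x z ^ 2 : ℝ) : EReal) := by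
      rw [EReal.coe_add, EReal.coe_add, ← hfp]
      exact (hmin z).trans (add_le_add hfz_le le_rfl)
    have h1' : b + 1 / (2 * lam) * dist x p ^ 2
        ≤ (1 - t) * b + t * c + 1 / (2 * lam) * dist x z ^ 2 := by exact_mod_cast h1
    have h2lam : (0:ℝ) < 2 * lam := by positivity
    have hne : (2 * lam) ≠ 0 := h2lam.ne'
    have LH : 2 * lam * b + dist x p ^ 2
        ≤ 2 * lam * ((1 - t) * b) + 2 * lam * (t * c) + dist x z ^ 2 := by
      have h1'' := mul_le_mul_of_nonneg_left h1' h2lam.le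
      have e1 : 2 * lam * (b + 1 / (2 * lam) * dist x p ^ 2)
          = 2 * lam * b + dist x p ^ 2 := by field_simp
      have e2 : 2 * lam * ((1 - t) * b + t * c + 1 / (2 * lam) * dist x z ^ 2)
          = 2 * lam * ((1 - t) * b) + 2 * lam * (t * c) + dist x z ^ 2 := by
        field_simp
      rw [e1, e2] at h1''
      exact h1''
    have h5 : t * (2 * lam * (b - c) + dist x p ^ 2 - dist x y ^ 2
        + (1 - t) * dist p y ^ 2) ≤ t * 0 := by nlinarith [LH, hcat]
    have h6 := (mul_le_mul_iff_right₀ ht.1).mp h5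
    linarith [h6]
  refine le_of_forall_pos_le_add ?_
  intro ε hε
  set d := dist p y ^ 2 with hd
  have hd0 : 0 ≤ d := by positivity
  set t := min 1 (ε / (d + 1)) with htdef
  have ht : t ∈ Set.Ioc (0:ℝ) 1 := ⟨lt_min one_pos (by positivity), min_le_left _ _⟩
  have hk := key t ht
  have htd : t * d ≤ ε := by
    have h1 : t ≤ ε / (d + 1) := min_le_right _ _
    have h2 : t * d ≤ (ε / (d + 1)) * (d + 1) :=
      mul_le_mul h1 (by linarith) hd0 (by positivity)
    rwa [div_mul_cancel₀ _ (by positivity : d + 1 ≠ 0)] at h2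
  linarith [hk, htd]

end AuxGeo

section AuxMeas

/-- A function factoring through a finite-range map with measurable fibers is measurable. -/
lemma measurable_comp_of_finiteRange {Ω H β : Type*} {m : MeasurableSpace Ω}
    [MeasurableSpace β] (φ : Ω → H) (hfin : (Set.range φ).Finite)
    (hfib : ∀ v : H, MeasurableSet[m] (φ ⁻¹' {v})) (ψ : H → β) :
    Measurable[m] (fun ω => ψ (φ ω)) := by
  intro B _
  have : (fun ω => ψ (φ ω)) ⁻¹' B = ⋃ v ∈ {v ∈ Set.range φ | ψ v ∈ B}, φ ⁻¹' {v} := by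
    ext ω
    simp only [Set.mem_preimage, Set.mem_iUnion, Set.mem_setOf_eq, Set.mem_singleton_iff]
    constructor
    · intro h; exact ⟨φ ω, ⟨⟨ω, rfl⟩, h⟩, rfl⟩
    · rintro ⟨v, ⟨_, hv⟩, rfl⟩; exact hv
  rw [this]
  exact MeasurableSet.biUnion (hfin.subset (Set.sep_subset _ _)).countable fun v _ => hfib v

lemma integrable_of_finiteRange {Ω : Type*} {m0 : MeasurableSpace Ω} {μ : Measure Ω}
    [IsFiniteMeasure μ] {f : Ω → ℝ} (hmeas : AEStronglyMeasurable f μ)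
    (hfin : (Set.range f).Finite) : Integrable f μ := by
  obtain ⟨C, hC⟩ := (hfin.image abs).bddAbove
  refine ⟨hmeas, HasFiniteIntegral.of_bounded (C := C) (Filter.Eventually.of_forall fun ω => ?_)⟩
  rw [Real.norm_eq_abs]
  exact hC ⟨f ω, ⟨ω, rfl⟩, rfl⟩

lemma ereal_coe_finset_sum {ι : Type*} (s : Finset ι) (g : ι → ℝ) :
    ((∑ i ∈ s, g i : ℝ) : EReal) = ∑ i ∈ s, ((g i : ℝ) : EReal) :=
  map_sum (⟨⟨Real.toEReal, EReal.coe_zero⟩, EReal.coe_add⟩ : ℝ →+ EReal) g s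

lemma ereal_finset_sum_ne_bot {ι : Type*} {s : Finset ι} {f : ι → EReal}
    (h : ∀ i ∈ s, f i ≠ ⊥) : ∑ i ∈ s, f i ≠ ⊥ := by
  induction s using Finset.cons_induction with
  | empty => simp
  | cons a s ha ih =>
    rw [Finset.sum_cons]
    rw [Ne, EReal.add_eq_bot_iff]
    push_neg
    exact ⟨h a (Finset.mem_cons_self a s), ih fun i hi => h i (Finset.mem_cons.2 (Or.inr hi))⟩

lemma ereal_finset_sum_eq_top {ι : Type*} [DecidableEq ι] {s : Finset ι} {f : ι → EReal}
    (hbot : ∀ i ∈ s, f i ≠ ⊥) {j : ι} (hj : j ∈ s) (htop : f j = ⊤) :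
    ∑ i ∈ s, f i = ⊤ := by
  rw [← Finset.add_sum_erase s f hj, htop]
  exact EReal.top_add_of_ne_bot
    (ereal_finset_sum_ne_bot fun i hi => hbot i (Finset.mem_of_mem_erase hi))

end AuxMeas

/-- Conditional expectation estimate for the random splitting proximal point
algorithm (Lemma on the almost-supermartingale property). -/
theorem random_splitting_ppa_condexp_estimate
    {H : Type*} [MetricSpace H] [CompleteSpace H]
    [MeasurableSpace H] [BorelSpace H]
    (G : Hadamard H)
    {Ω : Type*} {m0 : MeasurableSpace Ω} {μ : Measure Ω} [IsProbabilityMeasure μ]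
    (N : ℕ) (hN : 1 ≤ N)
    (fs : Fin N → H → EReal)
    (hfs_ne_bot : ∀ n, ∀ x : H, fs n x ≠ ⊥)
    (hfs_proper : ∀ n, ∃ x : H, fs n x ≠ ⊤)
    (hfs_conv : ∀ n, GeoConvex G (fs n))
    (hfs_lsc : ∀ n, LowerSemicontinuous (fs n))
    (lam : ℕ → ℝ) (hlam_pos : ∀ k, 0 < lam k)
    (r : ℕ → Ω → Fin N) (hr_meas : ∀ k, Measurable (r k))
    (hr_indep : iIndepFun (m := fun _ : ℕ => (inferInstance : MeasurableSpace (Fin N))) r μ)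
    (hr_unif : ∀ k : ℕ, ∀ n : Fin N, μ (r k ⁻¹' {n}) = (N : ENNReal)⁻¹)
    (x₀ : H) (x : ℕ → Ω → H) (xn : ℕ → Fin N → Ω → H)
    (hx_meas : ∀ k, Measurable (x k)) (hxn_meas : ∀ k n, Measurable (xn k n))
    (hx0 : ∀ ω, x 0 ω = x₀)
    (hxn_min : ∀ k : ℕ, ∀ n : Fin N, ∀ ω : Ω, ∀ z : H,
      fs n (xn k n ω) + ((1 / (2 * lam k) * dist (x k ω) (xn k n ω) ^ 2 : ℝ) : EReal)
        ≤ fs n z + ((1 / (2 * lam k) * dist (x k ω) z ^ 2 : ℝ) : EReal))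
    (hrec : ∀ k : ℕ, ∀ ω : Ω, x (k + 1) ω = xn k (r k ω) ω)
    (L : ℝ) (hL : 0 < L)
    (hlip : ∀ k : ℕ, ∀ n : Fin N, ∀ ω : Ω,
      fs n (x k ω) - fs n (xn k n ω) ≤ ((L * dist (x k ω) (xn k n ω) : ℝ) : EReal)) :
    ∀ y : H, (∑ n, fs n y) < ⊤ → ∀ k : ℕ,
      ∀ᵐ ω ∂μ,
        (((μ[fun ω' => dist (x (k + 1) ω') y ^ 2 |
              (⨆ i ∈ Set.Iic k, MeasurableSpace.comap (x i) inferInstance)]) ω : ℝ) : EReal)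
          ≤ ((dist (x k ω) y ^ 2 : ℝ) : EReal)
              - ((2 * lam k / (N : ℝ) : ℝ) : EReal)
                * ((∑ n, fs n (x k ω)) - ∑ n, fs n y)
              + ((4 * lam k ^ 2 * L ^ 2 : ℝ) : EReal) := by
  intro y hy k
  classical
  -- ## basic positivity
  have hNpos : (0:ℝ) < N := by exact_mod_cast hN
  -- ## finiteness facts
  have hy_ne_top : ∀ n, fs n y ≠ ⊤ := by
    intro n hn
    exact hy.ne (ereal_finset_sum_eq_top (fun i _ => hfs_ne_bot i y) (Finset.mem_univ n) hn)
  have hxn_ne_top : ∀ j n ω, fs n (xn j n ω) ≠ ⊤ := by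
    intro j n ω htop
    have h := hxn_min j n ω y
    have hcy : fs n y = (((fs n y).toReal : ℝ) : EReal) :=
      (EReal.coe_toReal (hy_ne_top n) (hfs_ne_bot n y)).symm
    rw [htop, EReal.top_add_coe, hcy, ← EReal.coe_add, top_le_iff] at h
    exact EReal.coe_ne_top _ h
  have hx_ne_top : ∀ j n ω, fs n (x j ω) ≠ ⊤ := by
    intro j n ω htop
    have h := hlip j n ω
    have hb : fs n (xn j n ω) = (((fs n (xn j n ω)).toReal : ℝ) : EReal) :=
      (EReal.coe_toReal (hxn_ne_top j n ω) (hfs_ne_bot n _)).symm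
    rw [htop, hb, EReal.top_sub_coe, top_le_iff] at h
    exact EReal.coe_ne_top _ h
  have hxn_coe : ∀ j n ω, fs n (xn j n ω) = (((fs n (xn j n ω)).toReal : ℝ) : EReal) :=
    fun j n ω => (EReal.coe_toReal (hxn_ne_top j n ω) (hfs_ne_bot n _)).symm
  have hx_coe : ∀ j n ω, fs n (x j ω) = (((fs n (x j ω)).toReal : ℝ) : EReal) :=
    fun j n ω => (EReal.coe_toReal (hx_ne_top j n ω) (hfs_ne_bot n _)).symm
  have hy_coe : ∀ n, fs n y = (((fs n y).toReal : ℝ) : EReal) :=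
    fun n => (EReal.coe_toReal (hy_ne_top n) (hfs_ne_bot n y)).symm
  -- ## the proximal points depend on ω only through x j ω
  have hfac : ∀ (j : ℕ) (n : Fin N) (ω ω' : Ω), x j ω = x j ω' → xn j n ω = xn j n ω' := by
    intro j n ω ω' hxx
    refine hadamard_prox_unique G (hfs_conv n) (hlam_pos j)
      (hxn_coe j n ω) (hxn_coe j n ω') (hxn_min j n ω) ?_
    intro z
    have := hxn_min j n ω' z
    rwa [← hxx] at this
  -- ## the filtration generated by the r's
  set M : ℕ → MeasurableSpace Ω :=
    fun j => ⨆ i ∈ Set.Iio j, MeasurableSpace.comap (r i) inferInstance with hM_def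
  have hMle : ∀ j, M j ≤ m0 := fun j => iSup₂_le fun i _ => (hr_meas i).comap_le
  have hMmono : ∀ {i j : ℕ}, i ≤ j → M i ≤ M j := by
    intro i j hij
    exact biSup_mono fun a ha => lt_of_lt_of_le ha hij
  -- ## finite range and fiber measurability of the trajectory
  have hstruct : ∀ j, (Set.range (x j)).Finite ∧
      ∀ v : H, MeasurableSet[M j] (x j ⁻¹' {v}) := by
    intro j
    induction j with
    | zero =>
      constructor
      · exact (Set.finite_singleton x₀).subset (by rintro v ⟨ω, rfl⟩; simp [hx0])
      · intro v
        by_cases hv : x₀ = v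
        · have : x 0 ⁻¹' {v} = Set.univ := by ext ω; simp [hx0, hv]
          rw [this]; exact @MeasurableSet.univ Ω (M 0)
        · have : x 0 ⁻¹' {v} = ∅ := by ext ω; simp [hx0, hv]
          rw [this]; exact @MeasurableSet.empty Ω (M 0)
    | succ j ih =>
      obtain ⟨ihfin, ihfib⟩ := ih
      have hψ : ∀ n : Fin N, ∃ ψ : H → H, ∀ ω, xn j n ω = ψ (x j ω) := by
        intro n
        refine ⟨fun v => if hv : ∃ ω, x j ω = v then xn j n hv.choose else x₀, fun ω => ?_⟩
        have hex : ∃ ω', x j ω' = x j ω := ⟨ω, rfl⟩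
        dsimp only
        rw [dif_pos hex]
        exact hfac j n ω hex.choose hex.choose_spec.symm
      choose ψ hψ using hψ
      constructor
      · have hsub : Set.range (x (j+1)) ⊆ ⋃ n : Fin N, ψ n '' Set.range (x j) := by
          rintro v ⟨ω, rfl⟩
          exact Set.mem_iUnion.2 ⟨r j ω, ⟨x j ω, ⟨ω, rfl⟩, by rw [← hψ (r j ω) ω, ← hrec j ω]⟩⟩
        exact (Set.finite_iUnion fun n => ihfin.image (ψ n)).subset hsub
      · intro v
        have hset : x (j+1) ⁻¹' {v}
            = ⋃ n : Fin N, (r j ⁻¹' {n}) ∩ ((fun ω => ψ n (x j ω)) ⁻¹' {v}) := by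
          ext ω
          simp only [Set.mem_preimage, Set.mem_singleton_iff, Set.mem_iUnion,
            Set.mem_inter_iff]
          constructor
          · intro h
            refine ⟨r j ω, rfl, ?_⟩
            rw [← hψ (r j ω) ω, ← hrec j ω]; exact h
          · rintro ⟨n, hn, hv⟩
            rw [hrec j ω, hn, hψ n ω]; exact hv
        rw [hset]
        refine MeasurableSet.iUnion fun n => MeasurableSet.inter ?_ ?_
        · have h1 : MeasurableSpace.comap (r j) inferInstance ≤ M (j+1) := by
            simp only [hM_def]
            exact le_iSup₂ (f := fun i' (_ : i' ∈ Set.Iio (j+1)) =>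
              MeasurableSpace.comap (r i') inferInstance) j (Set.mem_Iio.2 (Nat.lt_succ_self j))
          exact h1 _ ⟨{n}, measurableSet_singleton n, rfl⟩
        · exact hMmono (Nat.le_succ j) _
            (measurable_comp_of_finiteRange (x j) ihfin ihfib (ψ n)
              (measurableSet_singleton v))
  have hxMeasM : ∀ j, Measurable[M j] (x j) := fun j =>
    measurable_comp_of_finiteRange (x j) (hstruct j).1 (hstruct j).2 id
  -- ## the σ-algebras
  set m : MeasurableSpace Ω :=
    ⨆ i ∈ Set.Iic k, MeasurableSpace.comap (x i) inferInstance with hm_def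
  have hmle_rho : m ≤ M k := by
    refine iSup₂_le fun i hi => ?_
    exact (Measurable.comap_le (hxMeasM i)).trans (hMmono hi)
  have hrho_le : M k ≤ m0 := hMle k
  have hm_le : m ≤ m0 := hmle_rho.trans hrho_le
  letI instm0 : MeasurableSpace Ω := m0
  haveI : SigmaFinite (μ.trim hrho_le) := inferInstance
  haveI : SigmaFinite (μ.trim hm_le) := inferInstance
  -- ## factor maps at step k
  have hP : ∀ n : Fin N, ∃ ψ : H → H, ∀ ω, xn k n ω = ψ (x k ω) := by
    intro n
    refine ⟨fun v => if hv : ∃ ω, x k ω = v then xn k n hv.choose else x₀, fun ω => ?_⟩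
    have hex : ∃ ω', x k ω' = x k ω := ⟨ω, rfl⟩
    dsimp only
    rw [dif_pos hex]
    exact hfac k n ω hex.choose hex.choose_spec.symm
  choose P hP using hP
  -- ## the functions
  set D : Ω → ℝ := fun ω' => dist (x (k+1) ω') y ^ 2 with hD_def
  set Dn : Fin N → Ω → ℝ := fun n ω => dist (xn k n ω) y ^ 2 with hDn_def
  set hfun : Ω → ℝ := fun ω => (N:ℝ)⁻¹ * ∑ n, Dn n ω with hh_def
  set gbar : H → ℝ := fun v => dist v y ^ 2
      - (2 * lam k / (N:ℝ)) * ((∑ n, (fs n v).toReal) - ∑ n, (fs n y).toReal)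
      + 4 * lam k ^ 2 * L ^ 2 with hgbar_def
  set gfun : Ω → ℝ := fun ω => gbar (x k ω) with hg_def
  -- ## measurability and integrability
  have hfibM : ∀ v : H, MeasurableSet[M k] (x k ⁻¹' {v}) := (hstruct k).2
  have hfibm : ∀ v : H, MeasurableSet[m] (x k ⁻¹' {v}) := by
    intro v
    have h1 : MeasurableSpace.comap (x k) inferInstance ≤ m := by
      simp only [hm_def]
      exact le_iSup₂ (f := fun i' (_ : i' ∈ Set.Iic k) =>
        MeasurableSpace.comap (x i') inferInstance) k (Set.mem_Iic.2 le_rfl)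
    exact h1 _ ⟨{v}, measurableSet_singleton v, rfl⟩
  have hDnM : ∀ n, Measurable[M k] (Dn n) := by
    intro n
    have : Dn n = fun ω => (fun v => dist (P n v) y ^ 2) (x k ω) := by
      funext ω; simp only [hDn_def, hP n ω]
    rw [this]
    exact measurable_comp_of_finiteRange (x k) (hstruct k).1 hfibM
      (fun v => dist (P n v) y ^ 2)
  have hhM : Measurable[M k] hfun := by
    have : hfun = fun ω => (fun v => (N:ℝ)⁻¹ * ∑ n, dist (P n v) y ^ 2) (x k ω) := by
      funext ω
      simp only [hh_def, hDn_def]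
      congr 1
      exact Finset.sum_congr rfl fun n _ => by rw [hP n ω]
    rw [this]
    exact measurable_comp_of_finiteRange (x k) (hstruct k).1 hfibM
      (fun v => (N:ℝ)⁻¹ * ∑ n, dist (P n v) y ^ 2)
  have hgm : Measurable[m] gfun :=
    measurable_comp_of_finiteRange (x k) (hstruct k).1 hfibm gbar
  have hDm0 : Measurable[m0] D :=
    measurable_comp_of_finiteRange (x (k+1)) (hstruct (k+1)).1
      (fun v => (hx_meas (k+1)) (measurableSet_singleton v)) (fun v => dist v y ^ 2)
  have hD_fin : (Set.range D).Finite := by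
    have : Set.range D ⊆ (fun v => dist v y ^ 2) '' Set.range (x (k+1)) := by
      rintro t ⟨ω, rfl⟩; exact ⟨x (k+1) ω, ⟨ω, rfl⟩, rfl⟩
    exact ((hstruct (k+1)).1.image _).subset this
  have hD_int : Integrable D μ := integrable_of_finiteRange hDm0.aestronglyMeasurable hD_fin
  have hDn_fin : ∀ n, (Set.range (Dn n)).Finite := by
    intro n
    have : Set.range (Dn n) ⊆ (fun v => dist (P n v) y ^ 2) '' Set.range (x k) := by
      rintro t ⟨ω, rfl⟩; exact ⟨x k ω, ⟨ω, rfl⟩, by simp only [hDn_def, hP n ω]⟩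
    exact ((hstruct k).1.image _).subset this
  have hDn_int : ∀ n, Integrable (Dn n) μ := fun n =>
    integrable_of_finiteRange ((hDnM n).mono hrho_le le_rfl).aestronglyMeasurable (hDn_fin n)
  have hh_fin : (Set.range hfun).Finite := by
    have : Set.range hfun ⊆ (fun v => (N:ℝ)⁻¹ * ∑ n, dist (P n v) y ^ 2) '' Set.range (x k) := by
      rintro t ⟨ω, rfl⟩
      refine ⟨x k ω, ⟨ω, rfl⟩, ?_⟩
      simp only [hh_def, hDn_def]
      congr 1
      exact Finset.sum_congr rfl fun n _ => by rw [hP n ω]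
    exact ((hstruct k).1.image _).subset this
  have hh_int : Integrable hfun μ :=
    integrable_of_finiteRange (hhM.mono hrho_le le_rfl).aestronglyMeasurable hh_fin
  have hg_fin : (Set.range gfun).Finite := by
    have : Set.range gfun ⊆ gbar '' Set.range (x k) := by
      rintro t ⟨ω, rfl⟩; exact ⟨x k ω, ⟨ω, rfl⟩, rfl⟩
    exact ((hstruct k).1.image _).subset this
  have hg_int : Integrable gfun μ :=
    integrable_of_finiteRange ((hgm.mono hm_le le_rfl)).aestronglyMeasurable hg_fin
  -- ## the deterministic estimate
  have key : ∀ (n : Fin N) (ω : Ω), Dn n ω ≤ dist (x k ω) y ^ 2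
      - 2 * lam k * ((fs n (x k ω)).toReal - (fs n y).toReal) + 4 * lam k ^ 2 * L ^ 2 := by
    intro n ω
    set a := (fs n (x k ω)).toReal with ha
    set b := (fs n (xn k n ω)).toReal with hb
    set c := (fs n y).toReal with hc
    have prox := hadamard_prox_ineq G (hfs_conv n) (hlam_pos k)
      (hxn_coe k n ω) (hy_coe n) (hxn_min k n ω)
    have hab : a - b ≤ L * dist (x k ω) (xn k n ω) := by
      have h := hlip k n ω
      rw [hx_coe k n ω, hxn_coe k n ω, ← EReal.coe_sub] at h
      exact_mod_cast h
    have hdb2 : dist (x k ω) (xn k n ω) ^ 2 ≤ 2 * lam k * (a - b) := by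
      have h := hxn_min k n ω (x k ω)
      rw [hxn_coe k n ω, hx_coe k n ω, ← EReal.coe_add, ← EReal.coe_add] at h
      have h' : b + 1 / (2 * lam k) * dist (x k ω) (xn k n ω) ^ 2
          ≤ a + 1 / (2 * lam k) * dist (x k ω) (x k ω) ^ 2 := by exact_mod_cast h
      rw [dist_self] at h'
      have hl : (0:ℝ) < 2 * lam k := by have := hlam_pos k; positivity
      have := mul_le_mul_of_nonneg_left h' hl.le
      have e1 : 2 * lam k * (b + 1 / (2 * lam k) * dist (x k ω) (xn k n ω) ^ 2)
          = 2 * lam k * b + dist (x k ω) (xn k n ω) ^ 2 := by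
          rw [mul_add, ← mul_assoc (2 * lam k) (1 / (2 * lam k)), mul_one_div_cancel hl.ne', one_mul]
      rw [e1] at this
      nlinarith [this]
    have hdble : dist (x k ω) (xn k n ω) ≤ 2 * lam k * L := by
      have h2 : dist (x k ω) (xn k n ω) ^ 2 ≤ 2 * lam k * (L * dist (x k ω) (xn k n ω)) :=
        hdb2.trans (mul_le_mul_of_nonneg_left hab (by have := hlam_pos k; positivity))
      by_contra hgt
      push_neg at hgt
      have hdpos : 0 < dist (x k ω) (xn k n ω) :=
        lt_of_le_of_lt (by have := hlam_pos k; positivity) hgt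
      nlinarith [h2, mul_lt_mul_of_pos_right hgt hdpos]
    have hlk := hlam_pos k
    have hmul1 := mul_le_mul_of_nonneg_left hab (by positivity : (0:ℝ) ≤ 2 * lam k)
    have hmul2 := mul_le_mul_of_nonneg_left hdble
      (by positivity : (0:ℝ) ≤ 2 * lam k * L)
    simp only [hDn_def]
    nlinarith [prox, hmul1, hmul2, sq_nonneg (dist (x k ω) (xn k n ω))]
  have hle : ∀ ω, hfun ω ≤ gfun ω := by
    intro ω
    have hsum := Finset.sum_le_sum (fun n (_ : n ∈ Finset.univ) => key n ω)
    have hmul := mul_le_mul_of_nonneg_left hsum (by positivity : (0:ℝ) ≤ (N:ℝ)⁻¹)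
    refine hmul.trans_eq ?_
    simp only [hg_def, hgbar_def, Finset.sum_add_distrib, Finset.sum_sub_distrib,
      Finset.sum_const, Finset.card_univ, Fintype.card_fin, nsmul_eq_mul, ← Finset.mul_sum]
    field_simp
  -- ## independence
  have hIndep : Indep (MeasurableSpace.comap (r k) inferInstance) (M k) μ := by
    have h0 := (iIndepFun_iff_iIndep _ _ _).mp hr_indep
    have h2 := indep_iSup_of_disjoint (fun i => (hr_meas i).comap_le) h0
      (S := {k}) (T := Set.Iio k)
      (by simp [Set.disjoint_singleton_left])
    simpa [hM_def] using h2
  have hIndepFun : ∀ (X Y : Ω → ℝ),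
      Measurable[MeasurableSpace.comap (r k) inferInstance] X → Measurable[M k] Y →
      IndepFun X Y μ := fun X Y hX hY =>
    (IndepFun_iff_Indep X Y μ).2
      (indep_of_indep_of_le_left (indep_of_indep_of_le_right hIndep hY.comap_le) hX.comap_le)
  -- ## the set-integral identity
  have hsetint : ∀ s : Set Ω, MeasurableSet[M k] s →
      ∫ ω in s, D ω ∂μ = ∫ ω in s, hfun ω ∂μ := by
    intro s hs
    have hs0 : MeasurableSet[m0] s := hrho_le s hs
    set ind : Fin N → Ω → ℝ := fun n => (r k ⁻¹' {n}).indicator (fun _ => (1:ℝ)) with hind_def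
    have hind_meas : ∀ n, Measurable[MeasurableSpace.comap (r k) inferInstance] (ind n) := by
      intro n
      exact (@measurable_const ℝ Ω _ (MeasurableSpace.comap (r k) inferInstance)
        1).indicator ⟨{n}, measurableSet_singleton n, rfl⟩
    have hind_int : ∀ n, Integrable (ind n) μ := fun n =>
      (integrable_const (1:ℝ)).indicator ((hr_meas k) (measurableSet_singleton n))
    have hind_fin : ∀ n, (Set.range (ind n)).Finite := by
      intro n
      refine ((Set.finite_singleton (1:ℝ)).insert 0).subset ?_
      rintro t ⟨ω, rfl⟩
      by_cases hω : ω ∈ r k ⁻¹' {n}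
      · simp [hind_def, Set.indicator_of_mem hω]
      · simp [hind_def, Set.indicator_of_notMem hω]
    have hprod_int : ∀ n, Integrable (fun ω => ind n ω * Dn n ω) μ := by
      intro n
      refine integrable_of_finiteRange (Measurable.aestronglyMeasurable (Measurable.mul ?_ ?_)) ?_
      · exact measurable_const.indicator ((hr_meas k) (measurableSet_singleton n))
      · exact (hDnM n).mono hrho_le le_rfl
      · refine (Set.Finite.image2 (fun a b => a * b) (hind_fin n) (hDn_fin n)).subset ?_
        rintro t ⟨ω, rfl⟩
        exact Set.mem_image2_of_mem ⟨ω, rfl⟩ ⟨ω, rfl⟩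
    have hpt : ∀ ω, D ω = ∑ n, ind n ω * Dn n ω := by
      intro ω
      rw [Finset.sum_eq_single (r k ω)]
      · simp only [hind_def, hD_def, hDn_def, Set.indicator_of_mem
          (show ω ∈ r k ⁻¹' {r k ω} by simp), one_mul, hrec k ω]
      · intro n _ hn
        have : ω ∉ r k ⁻¹' {n} := by
          simp only [Set.mem_preimage, Set.mem_singleton_iff]
          exact fun h => hn h.symm
        simp [hind_def, Set.indicator_of_notMem this]
      · intro h; exact absurd (Finset.mem_univ _) h
    have hterm : ∀ n : Fin N, ∫ ω in s, ind n ω * Dn n ω ∂μ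
        = (N:ℝ)⁻¹ * ∫ ω in s, Dn n ω ∂μ := by
      intro n
      have e1 : ∫ ω in s, ind n ω * Dn n ω ∂μ
          = ∫ ω, ind n ω * (s.indicator (Dn n)) ω ∂μ := by
        rw [← integral_indicator (μ := μ) hs0]
        congr 1
        funext ω
        by_cases hω : ω ∈ s
        · simp [Set.indicator_of_mem hω]
        · simp [Set.indicator_of_notMem hω]
      rw [e1]
      have hindep := hIndepFun (ind n) (s.indicator (Dn n)) (hind_meas n)
        ((hDnM n).indicator hs)
      have := hindep.integral_mul_eq_mul_integral (hind_int n).aestronglyMeasurable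
        ((hDn_int n).indicator hs0).aestronglyMeasurable
      have e2 : ∫ ω, ind n ω * (s.indicator (Dn n)) ω ∂μ
          = (∫ ω, ind n ω ∂μ) * ∫ ω, (s.indicator (Dn n)) ω ∂μ := this
      rw [e2]
      have e3 : ∫ ω, ind n ω ∂μ = (N:ℝ)⁻¹ := by
        rw [hind_def]
        simp only [integral_indicator (μ := μ) ((hr_meas k) (measurableSet_singleton n)),
          integral_const, Measure.restrict_apply_univ, hr_unif k n, smul_eq_mul, mul_one]
        rw [Measure.real, Measure.restrict_apply_univ, hr_unif k n, ENNReal.toReal_inv, ENNReal.toReal_natCast]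
      rw [e3, integral_indicator (μ := μ) hs0]
    calc ∫ ω in s, D ω ∂μ = ∫ ω in s, (∑ n, ind n ω * Dn n ω) ∂μ := by
          congr 1; funext ω; exact hpt ω
      _ = ∑ n, ∫ ω in s, ind n ω * Dn n ω ∂μ := by
          refine integral_finset_sum _ fun n _ => (hprod_int n).integrableOn
      _ = ∑ n, (N:ℝ)⁻¹ * ∫ ω in s, Dn n ω ∂μ := Finset.sum_congr rfl fun n _ => hterm n
      _ = ∫ ω in s, hfun ω ∂μ := by
          rw [← Finset.mul_sum, ← integral_finset_sum _ fun n _ => (hDn_int n).integrableOn,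
            ← integral_const_mul]
  -- ## conditional expectation chain
  have hDcond : hfun =ᵐ[μ] μ[D | M k] :=
    ae_eq_condExp_of_forall_setIntegral_eq hrho_le hD_int
      (fun s _ _ => hh_int.integrableOn)
      (fun s hs _ => (hsetint s hs).symm)
      (StronglyMeasurable.aestronglyMeasurable hhM.stronglyMeasurable)
  have step1 : μ[D | m] =ᵐ[μ] μ[μ[D | M k] | m] := (condExp_condExp_of_le hmle_rho hrho_le).symm
  have step2 : μ[μ[D | M k] | m] =ᵐ[μ] μ[hfun | m] := condExp_congr_ae hDcond.symm
  have step3 : μ[hfun | m] ≤ᵐ[μ] μ[gfun | m] :=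
    condExp_mono hh_int hg_int (Filter.Eventually.of_forall hle)
  have step4 : μ[gfun | m] = gfun :=
    condExp_of_stronglyMeasurable hm_le hgm.stronglyMeasurable hg_int
  filter_upwards [step1, step2, step3] with ω h1 h2 h3
  have hfinal : (μ[D | m]) ω ≤ gfun ω := by
    rw [h1, h2]
    calc (μ[hfun | m]) ω ≤ (μ[gfun | m]) ω := h3
      _ = gfun ω := by rw [step4]
  -- ## EReal conversion
  have hsx : (∑ n, fs n (x k ω)) = ((∑ n, (fs n (x k ω)).toReal : ℝ) : EReal) := by
    rw [ereal_coe_finset_sum]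
    exact Finset.sum_congr rfl fun n _ => hx_coe k n ω
  have hsy : (∑ n, fs n y) = ((∑ n, (fs n y).toReal : ℝ) : EReal) := by
    rw [ereal_coe_finset_sum]
    exact Finset.sum_congr rfl fun n _ => hy_coe n
  rw [hsx, hsy, ← EReal.coe_sub, ← EReal.coe_mul, ← EReal.coe_sub, ← EReal.coe_add]
  exact EReal.coe_le_coe_iff.2 hfinal
end
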